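/- The only solution (Z1,Z2,Z3) ∈ ℂ³ of the system P(Z) = 0 and Z1·∂P/∂Z1 = Z2·∂P/∂Z2 = Z3·∂P/∂Z3, subject additionally to |Z1| = |Z2| = |Z3| = 1, is (1,1,1), where P(Z) = 1 - (2/3)(Z1+Z2+Z3) + (1/3)(Z1Z2+Z1Z3+Z2Z3). -/

import Mathlib

theorem stmt_12 (Z1 Z2 Z3 : ℂ)
    (hP : 1 - (2/3 : ℂ) * (Z1 + Z2 + Z3) + (1/3 : ℂ) * (Z1*Z2 + Z1*Z3 + Z2*Z3) = 0)
    (h12 : Z1 * (-(2/3 : ℂ) + (1/3 : ℂ) * (Z2 + Z3))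
         = Z2 * (-(2/3 : ℂ) + (1/3 : ℂ) * (Z1 + Z3)))
    (h23 : Z2 * (-(2/3 : ℂ) + (1/3 : ℂ) * (Z1 + Z3))
         = Z3 * (-(2/3 : ℂ) + (1/3 : ℂ) * (Z1 + Z2)))
    (m1 : ‖Z1‖ = 1) (m2 : ‖Z2‖ = 1) (m3 : ‖Z3‖ = 1) :
    Z1 = 1 ∧ Z2 = 1 ∧ Z3 = 1 := by
  have hZ3 : Z3 ≠ 2 := by intro h; rw [h] at m3; norm_num at m3
  have hZ1 : Z1 ≠ 2 := by intro h; rw [h] at m1; norm_num at m1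
  have e12 : (Z1 - Z2) * (Z3 - 2) = 0 := by linear_combination 3 * h12
  have e23 : (Z2 - Z3) * (Z1 - 2) = 0 := by linear_combination 3 * h23
  have h1 : Z1 = Z2 := by
    rcases mul_eq_zero.1 e12 with h | h
    · exact sub_eq_zero.1 h
    · exact absurd (sub_eq_zero.1 h) hZ3
  have h2 : Z2 = Z3 := by
    rcases mul_eq_zero.1 e23 with h | h
    · exact sub_eq_zero.1 h
    · exact absurd (sub_eq_zero.1 h) hZ1
  subst h1 h2
  have : (Z1 - 1) ^ 2 = 0 := by linear_combination hP
  have h1 : Z1 = 1 := by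
    have := pow_eq_zero_iff (n := 2) (by norm_num) |>.1 this
    exact sub_eq_zero.1 this
  exact ⟨h1, h1, h1⟩
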